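/- Let (X, ≤) be a preordered set, let T : X → X be a bijection with x ≤ y ⟺ T(x) ≤ T(y), whose induced ℤ-action on X has only finitely many orbits, and let n ≥ 1 be an integer. Let 𝓘 be the set of maps f : X → ℤ such that x ≤ y implies f(x) ≤ f(y) and f(T(x)) = f(x) + n for all x, and identify two such maps when they differ by an additive integer constant. If 𝓘 is nonempty, then 𝓘 (up to additive constants) is finite if and only if for all x, y ∈ X there exists k ∈ ℤ with x ≤ T^k(y). -/

import Mathlib

private lemma aux_zpow_one_add {X : Type*} (T : Equiv.Perm X) (k : ℤ) (x : X) :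
    (T ^ (1 + k)) x = T ((T ^ k) x) := by
  rw [zpow_add, zpow_one, Equiv.Perm.mul_apply]

private lemma aux_equivariant_zpow {X : Type*} (T : Equiv.Perm X) (f : X → ℤ) (n : ℤ)
    (hf : ∀ x, f (T x) = f x + n) : ∀ (k : ℤ) (x : X), f ((T ^ k) x) = f x + k * n := by
  have hf' : ∀ x, f (T⁻¹ x) = f x - n := by
    intro x
    have := hf (T⁻¹ x)
    rw [show T (T⁻¹ x) = x from T.apply_symm_apply x] at this
    linarith
  have hstep' : ∀ (k : ℤ) (x : X), (T ^ (-1 + k)) x = T⁻¹ ((T ^ k) x) := by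
    intro k x
    rw [zpow_add, zpow_neg_one, Equiv.Perm.mul_apply]
  intro k
  induction k using Int.induction_on with
  | zero => intro x; simp
  | succ k ih =>
      intro x
      rw [show ((k : ℤ) + 1) = 1 + k from by ring, aux_zpow_one_add, hf, ih]
      ring
  | pred k ih =>
      intro x
      rw [show (-(k : ℤ) - 1) = -1 + (-(k : ℤ)) from by ring, hstep', hf', ih]
      ring

theorem equivariant_monotone_labelings_finite_iff
    {X : Type*} [Preorder X] (T : Equiv.Perm X)
    (hT : ∀ x y : X, x ≤ y ↔ T x ≤ T y)
    (horb : {O : Set X | ∃ x : X, O = {y : X | ∃ k : ℤ, y = (T ^ k) x}}.Finite)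
    (n : ℕ) (hn : 1 ≤ n)
    (hne : {f : X → ℤ | (∀ ⦃x y : X⦄, x ≤ y → f x ≤ f y) ∧
      ∀ x : X, f (T x) = f x + (n : ℤ)}.Nonempty) :
    ({C : Set (X → ℤ) | ∃ f : X → ℤ,
        ((∀ ⦃x y : X⦄, x ≤ y → f x ≤ f y) ∧ ∀ x : X, f (T x) = f x + (n : ℤ)) ∧
        C = {g : X → ℤ | ∃ c : ℤ, ∀ x : X, g x = f x + c}}.Finite ↔
      ∀ x y : X, ∃ k : ℤ, x ≤ (T ^ k) y) := by
  classical
  have hn0 : (n : ℤ) ≠ 0 := by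
    have : (1 : ℤ) ≤ (n : ℤ) := by exact_mod_cast hn
    omega
  have hnpos : (0 : ℤ) ≤ (n : ℤ) := by positivity
  constructor
  · -- finiteness implies connectivity
    intro hfin x y
    by_contra hcon
    push_neg at hcon
    obtain ⟨f₀, hmono, heq⟩ := hne
    set D : Set X := {z | ∃ k : ℤ, z ≤ (T ^ k) y} with hD
    have hyD : y ∈ D := ⟨0, by simp⟩
    have hxD : x ∉ D := by rintro ⟨k, hk⟩; exact hcon k hk
    have hDinv : ∀ z : X, T z ∈ D ↔ z ∈ D := by
      intro z
      constructor
      · rintro ⟨k, hk⟩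
        refine ⟨k - 1, ?_⟩
        have hky := aux_zpow_one_add T (k - 1) y
        rw [show 1 + (k - 1) = k from by ring] at hky
        rw [hky] at hk
        exact (hT _ _).mpr hk
      · rintro ⟨k, hk⟩
        refine ⟨1 + k, ?_⟩
        rw [aux_zpow_one_add]
        exact (hT _ _).mp hk
    set g : ℕ → X → ℤ := fun m z => f₀ z + (if z ∈ D then 0 else (m : ℤ) * n) with hg
    have hgmem : ∀ m : ℕ, (∀ ⦃a b : X⦄, a ≤ b → g m a ≤ g m b) ∧
        ∀ z : X, g m (T z) = g m z + (n : ℤ) := by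
      intro m
      constructor
      · intro a b hab
        have hfab := hmono hab
        show f₀ a + (if a ∈ D then 0 else (m : ℤ) * n)
            ≤ f₀ b + (if b ∈ D then 0 else (m : ℤ) * n)
        have hmn : (0 : ℤ) ≤ (m : ℤ) * n := by positivity
        by_cases hb : b ∈ D
        · have ha : a ∈ D := by
            obtain ⟨k, hk⟩ := hb
            exact ⟨k, le_trans hab hk⟩
          rw [if_pos ha, if_pos hb]
          linarith
        · rw [if_neg hb]
          by_cases ha : a ∈ D
          · rw [if_pos ha]; linarith
          · rw [if_neg ha]; linarith
      · intro z
        have hif : (if T z ∈ D then (0 : ℤ) else (m : ℤ) * n)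
            = (if z ∈ D then (0 : ℤ) else (m : ℤ) * n) := by
          by_cases h : z ∈ D
          · rw [if_pos ((hDinv z).mpr h), if_pos h]
          · rw [if_neg (fun hh => h ((hDinv z).mp hh)), if_neg h]
        show f₀ (T z) + (if T z ∈ D then 0 else (m : ℤ) * n)
            = f₀ z + (if z ∈ D then 0 else (m : ℤ) * n) + (n : ℤ)
        rw [heq, hif]
        ring
    have hinj : Function.Injective
        (fun m : ℕ => {g' : X → ℤ | ∃ c : ℤ, ∀ z : X, g' z = g m z + c}) := by
      intro m m' hmm
      have h0 : g m ∈ (fun m : ℕ => {g' : X → ℤ | ∃ c : ℤ, ∀ z : X, g' z = g m z + c}) m := by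
        show ∃ c : ℤ, ∀ z : X, g m z = g m z + c
        exact ⟨0, fun z => by ring⟩
      rw [hmm] at h0
      obtain ⟨c, hc⟩ := h0
      have hcy : f₀ y + (if y ∈ D then 0 else (m : ℤ) * n)
          = f₀ y + (if y ∈ D then 0 else (m' : ℤ) * n) + c := hc y
      have hcx : f₀ x + (if x ∈ D then 0 else (m : ℤ) * n)
          = f₀ x + (if x ∈ D then 0 else (m' : ℤ) * n) + c := hc x
      rw [if_pos hyD, if_pos hyD] at hcy
      rw [if_neg hxD, if_neg hxD] at hcx
      have hc0 : c = 0 := by linarith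
      have hmul : (m : ℤ) * n = (m' : ℤ) * n := by linarith
      have := mul_right_cancel₀ hn0 hmul
      exact_mod_cast this
    have hall : ∀ m : ℕ, (fun m : ℕ => {g' : X → ℤ | ∃ c : ℤ, ∀ z : X, g' z = g m z + c}) m ∈
        {C : Set (X → ℤ) | ∃ f : X → ℤ,
          ((∀ ⦃x y : X⦄, x ≤ y → f x ≤ f y) ∧ ∀ x : X, f (T x) = f x + (n : ℤ)) ∧
          C = {g : X → ℤ | ∃ c : ℤ, ∀ x : X, g x = f x + c}} :=
      fun m => ⟨g m, hgmem m, rfl⟩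
    have hinf := Set.infinite_of_injective_forall_mem hinj hall
    exact hinf hfin
  · -- connectivity implies finiteness
    intro hconn
    by_cases hX : Nonempty X
    · obtain ⟨x₀⟩ := hX
      set Orb : Set (Set X) := {O : Set X | ∃ x : X, O = {y : X | ∃ k : ℤ, y = (T ^ k) x}}
        with hOrb
      have hrep : ∀ O ∈ Orb, ∃ x : X, O = {y : X | ∃ k : ℤ, y = (T ^ k) x} := fun O hO => hO
      choose rep hrepspec using hrep
      have hOy : ∀ y : X, {z : X | ∃ k : ℤ, z = (T ^ k) y} ∈ Orb := fun y => ⟨y, rfl⟩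
      have hself : ∀ y : X, ∃ k : ℤ, y = (T ^ k) (rep _ (hOy y)) := by
        intro y
        have hy : y ∈ {z : X | ∃ k : ℤ, z = (T ^ k) y} := ⟨0, by simp⟩
        rw [hrepspec _ (hOy y)] at hy
        exact hy
      choose κ hκ using hself
      have hbd : ∀ (O : Set X) (hO : O ∈ Orb), ∃ k l : ℤ,
          x₀ ≤ (T ^ k) (rep O hO) ∧ rep O hO ≤ (T ^ l) x₀ := by
        intro O hO
        obtain ⟨k, hk⟩ := hconn x₀ (rep O hO)
        obtain ⟨l, hl⟩ := hconn (rep O hO) x₀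
        exact ⟨k, l, hk, hl⟩
      choose kb lb hkb hlb using hbd
      set S : Set (X → ℤ) := {f : X → ℤ | ((∀ ⦃x y : X⦄, x ≤ y → f x ≤ f y) ∧
        ∀ x : X, f (T x) = f x + (n : ℤ)) ∧ f x₀ = 0} with hS
      set Φ : (X → ℤ) → (↥horb.toFinset → ℤ) :=
        fun f O => f (rep O.1 (horb.mem_toFinset.mp O.2)) with hΦ
      -- S is finite
      have hSfin : S.Finite := by
        have hsub : Φ '' S ⊆ Set.pi Set.univ
            (fun O : ↥horb.toFinset => Set.Icc
              (-(kb O.1 (horb.mem_toFinset.mp O.2)) * (n : ℤ))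
              ((lb O.1 (horb.mem_toFinset.mp O.2)) * (n : ℤ))) := by
          rintro h ⟨f, ⟨⟨hmono, heq⟩, hzero⟩, rfl⟩
          intro O _
          have hO := horb.mem_toFinset.mp O.2
          constructor
          · have h1 := hmono (hkb O.1 hO)
            rw [aux_equivariant_zpow T f n heq, hzero] at h1
            linarith
          · have h2 := hmono (hlb O.1 hO)
            rw [aux_equivariant_zpow T f n heq, hzero] at h2
            linarith
        have hpifin : (Set.pi Set.univ
            (fun O : ↥horb.toFinset => Set.Icc
              (-(kb O.1 (horb.mem_toFinset.mp O.2)) * (n : ℤ))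
              ((lb O.1 (horb.mem_toFinset.mp O.2)) * (n : ℤ)))).Finite := by
          have : Finite ↥horb.toFinset := FinsetCoe.fintype _ |>.finite
          exact Set.Finite.pi (fun O => Set.finite_Icc _ _)
        have himg : (Φ '' S).Finite := hpifin.subset hsub
        refine Set.Finite.of_finite_image himg ?_
        intro f hf f' hf' hff
        funext z
        have h1 : f z = f (rep _ (hOy z)) + κ z * n := by
          conv_lhs => rw [hκ z]
          exact aux_equivariant_zpow T f n hf.1.2 (κ z) _
        have h1' : f' z = f' (rep _ (hOy z)) + κ z * n := by
          conv_lhs => rw [hκ z]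
          exact aux_equivariant_zpow T f' n hf'.1.2 (κ z) _
        have hmem : {w : X | ∃ k : ℤ, w = (T ^ k) z} ∈ horb.toFinset :=
          horb.mem_toFinset.mpr (hOy z)
        have h2 : f (rep _ (hOy z)) = f' (rep _ (hOy z)) := by
          have := congrFun hff ⟨_, hmem⟩
          exact this
        rw [h1, h1', h2]
      -- the class set is contained in the image of S
      refine Set.Finite.subset (hSfin.image
        (fun f => {g : X → ℤ | ∃ c : ℤ, ∀ x : X, g x = f x + c})) ?_
      rintro C ⟨f, ⟨hmono, heq⟩, rfl⟩
      refine ⟨fun z => f z - f x₀, ⟨⟨?_, ?_⟩, ?_⟩, ?_⟩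
      · intro a b hab
        show f a - f x₀ ≤ f b - f x₀
        have := hmono hab
        linarith
      · intro z
        show f (T z) - f x₀ = f z - f x₀ + (n : ℤ)
        have := heq z
        linarith
      · show f x₀ - f x₀ = 0
        ring
      · ext g
        constructor
        · rintro ⟨c, hc⟩
          refine ⟨c - f x₀, fun z => ?_⟩
          have hz : g z = f z - f x₀ + c := hc z
          rw [hz]; ring
        · rintro ⟨c, hc⟩
          refine ⟨c + f x₀, fun z => ?_⟩
          show g z = f z - f x₀ + (c + f x₀)
          rw [hc z]; ring
    · -- X is empty
      refine Set.Finite.subset (Set.finite_singleton (Set.univ : Set (X → ℤ))) ?_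
      rintro C ⟨f, _, rfl⟩
      have : IsEmpty X := not_nonempty_iff.mp hX
      simp only [Set.mem_singleton_iff]
      ext g
      simp only [Set.mem_setOf_eq, Set.mem_univ, iff_true]
      exact ⟨0, fun z => (this.false z).elim⟩
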